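/- Let μ ∈ ℝ, let k ≥ 1 be an integer, and let Z₁,…,Z_k be i.i.d. real Gaussian random variables with Z_i ~ N(μ, 1). Then for all c with 0 < c < k(1 + μ²), Pr[Σ_{j=1}^k Z_j² ≤ c] ≤ exp(−(k(1 + μ²) − c)²/(4k(1 + 2μ²))). -/

import Mathlib

open MeasureTheory ProbabilityTheory Real NNReal ENNReal

/-- Quadratic lower bound on the logarithm: for `u ≥ 0`, `u - u²/2 ≤ log (1 + u)`. -/
lemma aux_log_lb {u : ℝ} (hu : 0 ≤ u) : u - u ^ 2 / 2 ≤ Real.log (1 + u) := by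
  have key : MonotoneOn (fun x : ℝ => Real.log (1 + x) - (x - x ^ 2 / 2)) (Set.Ici 0) := by
    have hderiv : ∀ x ∈ interior (Set.Ici (0:ℝ)),
        HasDerivAt (fun x : ℝ => Real.log (1 + x) - (x - x ^ 2 / 2))
          ((1 + x)⁻¹ - (1 - x)) x := by
      intro x hx
      rw [interior_Ici] at hx
      have hx0 : (0:ℝ) < x := hx
      have h1 : HasDerivAt (fun x : ℝ => 1 + x) 1 x := by
        simpa using (hasDerivAt_id x).const_add 1
      have h2 : HasDerivAt (fun x : ℝ => Real.log (1 + x)) ((1 + x)⁻¹ * 1) x :=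
        (Real.hasDerivAt_log (by linarith)).comp x h1
      have h3 : HasDerivAt (fun x : ℝ => x - x ^ 2 / 2) (1 - 2 * x ^ 1 / 2) x :=
        (hasDerivAt_id x).sub ((hasDerivAt_pow 2 x).div_const 2)
      exact (h2.sub h3).congr_deriv (by ring)
    refine monotoneOn_of_deriv_nonneg (convex_Ici 0) ?_ ?_ ?_
    · apply ContinuousOn.sub
      · apply ContinuousOn.log (by fun_prop)
        intro x hx
        simp only [Set.mem_Ici] at hx
        intro h; linarith
      · fun_prop
    · intro x hx
      exact (hderiv x hx).differentiableAt.differentiableWithinAt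
    · intro x hx
      rw [(hderiv x hx).deriv]
      rw [interior_Ici] at hx
      have hx0 : (0:ℝ) < x := hx
      have heq : (1 + x)⁻¹ - (1 - x) = x ^ 2 / (1 + x) := by
        field_simp
        ring
      rw [heq]
      positivity
  have := key (Set.self_mem_Ici) hu hu
  simpa using this

/-- Real Gaussian integral with linear and constant terms. -/
lemma aux_rexp_quadratic {b : ℝ} (hb : 0 < b) (c d : ℝ) :
    ∫ x : ℝ, Real.exp (-b * x ^ 2 + c * x + d)
      = Real.sqrt (π / b) * Real.exp (d + c ^ 2 / (4 * b)) := by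
  have h : ∀ x : ℝ, Real.exp (-b * x ^ 2 + c * x + d)
      = Real.exp (-b * (x + -(c / (2 * b))) ^ 2) * Real.exp (d + c ^ 2 / (4 * b)) := by
    intro x
    rw [← Real.exp_add]
    congr 1
    field_simp
    ring
  simp_rw [h]
  rw [MeasureTheory.integral_mul_const]
  rw [integral_add_right_eq_self (fun y : ℝ => Real.exp (-b * y ^ 2)) (-(c / (2 * b)))]
  rw [integral_gaussian]

/-- The Laplace transform of the square of a `N(μ,1)` Gaussian. -/
lemma aux_gauss_sq_int (μ : ℝ) {t : ℝ} (ht : 0 < t) :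
    ∫ x : ℝ, Real.exp (-t * x ^ 2) ∂(gaussianReal μ 1)
      = Real.exp (-(t * μ ^ 2) / (1 + 2 * t)) / Real.sqrt (1 + 2 * t) := by
  have h1t : (0:ℝ) < 1 + 2 * t := by linarith
  rw [gaussianReal_of_var_ne_zero μ one_ne_zero]
  have hpdf : (gaussianPDF μ 1)
      = fun x => ((Real.toNNReal (gaussianPDFReal μ 1 x) : ℝ≥0) : ℝ≥0∞) := rfl
  rw [hpdf, integral_withDensity_eq_integral_smul
    ((measurable_gaussianPDFReal μ 1).real_toNNReal) (fun x => Real.exp (-t * x ^ 2))]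
  have hcong : ∀ x : ℝ, (Real.toNNReal (gaussianPDFReal μ 1 x)) • Real.exp (-t * x ^ 2)
      = (Real.sqrt (2 * π))⁻¹ * Real.exp (-(t + 1/2) * x ^ 2 + μ * x + -(μ ^ 2) / 2) := by
    intro x
    rw [NNReal.smul_def, smul_eq_mul, Real.coe_toNNReal _ (gaussianPDFReal_nonneg μ 1 x)]
    rw [gaussianPDFReal]
    push_cast
    rw [mul_one, mul_assoc, ← Real.exp_add]
    congr 1
    ring
  rw [MeasureTheory.integral_congr_ae (Filter.Eventually.of_forall hcong)]
  rw [MeasureTheory.integral_const_mul, aux_rexp_quadratic (by linarith) μ (-(μ ^ 2) / 2)]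
  have hπ : (0:ℝ) < 2 * π := by positivity
  have h2 : π / (t + 1/2) = 2 * π / (1 + 2 * t) := by
    field_simp
    ring
  have hexp : -(μ ^ 2) / 2 + μ ^ 2 / (4 * (t + 1/2)) = -(t * μ ^ 2) / (1 + 2 * t) := by
    field_simp
    ring
  rw [h2, hexp, Real.sqrt_div hπ.le]
  have hs1 : (0:ℝ) < Real.sqrt (2 * π) := Real.sqrt_pos.mpr hπ
  have hs2 : (0:ℝ) < Real.sqrt (1 + 2 * t) := Real.sqrt_pos.mpr h1t
  field_simp

/-- Specialization of Birgé's noncentral chi-square lower tail bound to equal means: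
if `Z₁, …, Z_k` are i.i.d. Gaussians `N(μ, 1)`, then for `0 < c < k(1 + μ²)`,
`Pr[∑ Z_j² ≤ c] ≤ exp(−(k(1 + μ²) − c)² / (4k(1 + 2μ²)))`. -/
theorem stmt_5 {Ω : Type*} [MeasurableSpace Ω] (P : Measure Ω) [IsProbabilityMeasure P]
    (k : ℕ) (hk : 1 ≤ k) (μ : ℝ) (Z : Fin k → Ω → ℝ)
    (hmeas : ∀ j, Measurable (Z j))
    (hindep : iIndepFun Z P)
    (hlaw : ∀ j, Measure.map (Z j) P = gaussianReal μ 1)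
    (c : ℝ) (hc0 : 0 < c) (hc : c < k * (1 + μ ^ 2)) :
    P {ω | ∑ j, Z j ω ^ 2 ≤ c} ≤
      ENNReal.ofReal
        (Real.exp (-(k * (1 + μ ^ 2) - c) ^ 2 / (4 * k * (1 + 2 * μ ^ 2)))) := by
  have hk0 : (0:ℝ) < k := by exact_mod_cast hk
  set A : ℝ := k * (1 + μ ^ 2) - c with hA_def
  have hA : 0 < A := by simp only [hA_def]; linarith
  have hden : (0:ℝ) < 2 * k * (1 + 2 * μ ^ 2) := by positivity
  set t : ℝ := A / (2 * k * (1 + 2 * μ ^ 2)) with ht_def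
  have ht : 0 < t := div_pos hA hden
  have h1t : (0:ℝ) < 1 + 2 * t := by linarith
  -- the squared variables
  set X : Fin k → Ω → ℝ := fun j ω => Z j ω ^ 2 with hX_def
  have hXmeas : ∀ j, Measurable (X j) := fun j => (hmeas j).pow_const 2
  have hXindep : iIndepFun X P := by
    have := hindep.comp (fun _ (x : ℝ) => x ^ 2) (fun _ => measurable_id.pow_const 2)
    exact this
  -- integrability: exp(-t * X j ω) is bounded by 1
  have hbound : ∀ (j : Fin k) (ω : Ω), ‖Real.exp (-t * X j ω)‖ ≤ 1 := by
    intro j ω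
    rw [Real.norm_eq_abs, Real.abs_exp]
    refine Real.exp_le_one_iff.mpr ?_
    have : (0:ℝ) ≤ X j ω := sq_nonneg _
    nlinarith
  have hXint : ∀ j, Integrable (fun ω => Real.exp (-t * X j ω)) P := by
    intro j
    refine (integrable_const (1:ℝ)).mono' ?_ (Filter.Eventually.of_forall (hbound j))
    exact (((hXmeas j).const_mul (-t)).exp).aestronglyMeasurable
  -- the sum
  have hSsum : (fun ω => ∑ j, Z j ω ^ 2) = ∑ j, X j := by
    funext ω
    simp [hX_def]
  have hSbound : ∀ ω : Ω, ‖Real.exp (-t * (∑ j, X j) ω)‖ ≤ 1 := by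
    intro ω
    rw [Real.norm_eq_abs, Real.abs_exp]
    refine Real.exp_le_one_iff.mpr ?_
    have h0 : (0:ℝ) ≤ (∑ j, X j) ω := by
      rw [Finset.sum_apply]
      exact Finset.sum_nonneg fun j _ => sq_nonneg _
    nlinarith
  have hSmeas : Measurable (∑ j, X j) := by
    have h : Measurable fun ω => ∑ j, X j ω := by
      apply Finset.measurable_sum
      intro j _
      exact hXmeas j
    have heq : (∑ j, X j) = fun ω => ∑ j, X j ω := by
      funext ω; simp [Finset.sum_apply]
    rw [heq]
    exact h
  have hSint : Integrable (fun ω => Real.exp (-t * (∑ j, X j) ω)) P := by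
    refine (integrable_const (1:ℝ)).mono' ?_ (Filter.Eventually.of_forall hSbound)
    exact ((hSmeas.const_mul (-t)).exp).aestronglyMeasurable
  -- Chernoff bound
  have hcher := measure_le_le_exp_mul_mgf (X := ∑ j, X j) (μ := P) c
    (neg_nonpos.mpr ht.le) hSint
  -- compute the mgf of each coordinate
  have hmgf_j : ∀ j, mgf (X j) P (-t)
      = Real.exp (-(t * μ ^ 2) / (1 + 2 * t)) / Real.sqrt (1 + 2 * t) := by
    intro j
    have hmap : ∫ x : ℝ, Real.exp (-t * x ^ 2) ∂(Measure.map (Z j) P)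
        = ∫ ω, Real.exp (-t * (Z j ω) ^ 2) ∂P :=
      integral_map (hmeas j).aemeasurable
        ((measurable_id.pow_const 2).const_mul (-t)).exp.aestronglyMeasurable
    have : mgf (X j) P (-t) = ∫ x : ℝ, Real.exp (-t * x ^ 2) ∂(Measure.map (Z j) P) := by
      rw [hmap]
      rw [mgf]
    rw [this, hlaw j, aux_gauss_sq_int μ ht]
  have hmgf_sum : mgf (∑ j, X j) P (-t)
      = (Real.exp (-(t * μ ^ 2) / (1 + 2 * t)) / Real.sqrt (1 + 2 * t)) ^ k := by
    rw [hXindep.mgf_sum hXmeas Finset.univ]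
    rw [Finset.prod_congr rfl fun j _ => hmgf_j j]
    simp [div_pow]
  -- bound the per-coordinate mgf
  have hG_le : Real.exp (-(t * μ ^ 2) / (1 + 2 * t)) / Real.sqrt (1 + 2 * t)
      ≤ Real.exp (-t * (1 + μ ^ 2) + t ^ 2 * (1 + 2 * μ ^ 2)) := by
    have hsqrt : Real.sqrt (1 + 2 * t) = Real.exp (Real.log (1 + 2 * t) / 2) := by
      rw [← Real.log_sqrt h1t.le, Real.exp_log (Real.sqrt_pos.mpr h1t)]
    rw [hsqrt, ← Real.exp_sub, Real.exp_le_exp]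
    have hlog : 2 * t - (2 * t) ^ 2 / 2 ≤ Real.log (1 + 2 * t) :=
      aux_log_lb (by linarith)
    have hfrac : -(t * μ ^ 2) / (1 + 2 * t) ≤ -(t * μ ^ 2) + 2 * t ^ 2 * μ ^ 2 := by
      rw [div_le_iff₀ h1t]
      nlinarith [sq_nonneg μ, sq_nonneg t, mul_nonneg (mul_nonneg ht.le ht.le) (sq_nonneg μ)]
    nlinarith
  -- combine
  have hfinal : Real.exp (-(-t) * c) * mgf (∑ j, X j) P (-t)
      ≤ Real.exp (-A ^ 2 / (4 * k * (1 + 2 * μ ^ 2))) := by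
    rw [hmgf_sum]
    have h1 : (Real.exp (-(t * μ ^ 2) / (1 + 2 * t)) / Real.sqrt (1 + 2 * t)) ^ k
        ≤ Real.exp (-t * (1 + μ ^ 2) + t ^ 2 * (1 + 2 * μ ^ 2)) ^ k := by
      apply pow_le_pow_left₀ _ hG_le
      positivity
    have h2 : Real.exp (-(-t) * c) * (Real.exp (-(t * μ ^ 2) / (1 + 2 * t)) / Real.sqrt (1 + 2 * t)) ^ k
        ≤ Real.exp (t * c) * Real.exp (-t * (1 + μ ^ 2) + t ^ 2 * (1 + 2 * μ ^ 2)) ^ k := by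
      rw [neg_neg]
      exact mul_le_mul_of_nonneg_left h1 (Real.exp_pos _).le
    refine h2.trans ?_
    rw [← Real.exp_nat_mul, ← Real.exp_add, Real.exp_le_exp]
    have hteq : t * (2 * k * (1 + 2 * μ ^ 2)) = A := by
      rw [ht_def]
      field_simp
    have : t * c + k * (-t * (1 + μ ^ 2) + t ^ 2 * (1 + 2 * μ ^ 2))
        = -A ^ 2 / (4 * k * (1 + 2 * μ ^ 2)) := by
      have hc_eq : c = k * (1 + μ ^ 2) - A := by rw [hA_def]; ring
      rw [hc_eq]
      rw [ht_def]
      field_simp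
      ring
    linarith [this.le, this.ge]
  -- conclude
  have hset : {ω | ∑ j, Z j ω ^ 2 ≤ c} = {ω | (∑ j, X j) ω ≤ c} := by
    ext ω
    simp [Finset.sum_apply, hX_def]
  rw [hset]
  have hne : P {ω | (∑ j, X j) ω ≤ c} ≠ ⊤ := measure_ne_top _ _
  have : P {ω | (∑ j, X j) ω ≤ c} ≤ ENNReal.ofReal (Real.exp (-A ^ 2 / (4 * k * (1 + 2 * μ ^ 2)))) := by
    rw [← ENNReal.ofReal_toReal hne]
    exact ENNReal.ofReal_le_ofReal (hcher.trans hfinal)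
  exact this
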